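/- Let λ = (λ_1,…,λ_n) be a tuple of nonnegative integers (not necessarily weakly decreasing) such that λ_i = λ_{i+1} + 1 for some 1 ≤ i ≤ n−1, and let λ* be the tuple obtained from λ by replacing (λ_i, λ_{i+1}) with (λ_i − 1, λ_{i+1} + 1). Then P_{λ*}(x;t) = t · P_λ(x;t) in F. -/

import Mathlib

open MvPolynomial Finset

noncomputable section

abbrev R12 (n : ℕ) : Type := MvPolynomial (Option (Fin n)) ℚ

/-- The field of rational functions over `ℚ` in `t, x_1, …, x_n`
(the variable `none` is `t`, and `some i` is `x_{i+1}`). -/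
abbrev F12 (n : ℕ) : Type := FractionRing (R12 n)

def t12 (n : ℕ) : F12 n := algebraMap (R12 n) (F12 n) (X none)

def x12 (n : ℕ) (i : Fin n) : F12 n := algebraMap (R12 n) (F12 n) (X (some i))

/-- The action of `σ ∈ S_n` on `F12 n`, permuting `x_1, …, x_n` and fixing `t`. -/
def pact12 (n : ℕ) (σ : Equiv.Perm (Fin n)) : F12 n →+* F12 n :=
  IsFractionRing.lift
    (g := (algebraMap (R12 n) (F12 n)).comp (rename (Equiv.optionCongr σ)).toRingHom)
    (by
      rw [RingHom.coe_comp]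
      exact (IsFractionRing.injective (R12 n) (F12 n)).comp
        (rename_injective _ (Equiv.injective _)))

/-- The Hall–Littlewood polynomial
`P_λ(x;t) = Σ_σ σ(x^λ ∏_{i<j} (x_i - t x_j)/(x_i - x_j))`. -/
def HL12 (n : ℕ) (lam : Fin n → ℕ) : F12 n :=
  ∑ σ : Equiv.Perm (Fin n), pact12 n σ
    ((∏ i : Fin n, x12 n i ^ lam i) *
      ∏ i : Fin n, ∏ j ∈ Finset.Ioi i, (x12 n i - t12 n * x12 n j) / (x12 n i - x12 n j))

lemma pact12_algebraMap (n : ℕ) (σ : Equiv.Perm (Fin n)) (r : R12 n) :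
    pact12 n σ (algebraMap (R12 n) (F12 n) r)
      = algebraMap (R12 n) (F12 n) (rename (Equiv.optionCongr σ) r) :=
  IsFractionRing.lift_algebraMap _ _

lemma pact12_t (n : ℕ) (σ : Equiv.Perm (Fin n)) : pact12 n σ (t12 n) = t12 n := by
  rw [t12, pact12_algebraMap, rename_X]; rfl

lemma pact12_x (n : ℕ) (σ : Equiv.Perm (Fin n)) (j : Fin n) :
    pact12 n σ (x12 n j) = x12 n (σ j) := by
  rw [x12, pact12_algebraMap, rename_X]; rfl

lemma pact12_pact12 (n : ℕ) (σ τ : Equiv.Perm (Fin n)) (z : F12 n) :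
    pact12 n σ (pact12 n τ z) = pact12 n (σ * τ) z := by
  have : (pact12 n σ).comp (pact12 n τ) = pact12 n (σ * τ) := by
    apply IsLocalization.ringHom_ext (nonZeroDivisors (R12 n))
    ext r
    · simp [RingHom.comp_apply, pact12_algebraMap]
    · cases r <;>
        simp [RingHom.comp_apply, pact12_algebraMap, rename_X, Equiv.Perm.mul_apply]
  exact DFunLike.congr_fun this z

lemma x12_ne_zero (n : ℕ) (a : Fin n) : x12 n a ≠ 0 := by
  intro hz
  have h0 : (X (some a) : R12 n) = 0 :=
    IsFractionRing.injective (R12 n) (F12 n) (by simpa [x12] using hz)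
  have hX : (X (some a) : R12 n) ≠ 0 := X_ne_zero _
  exact hX h0

lemma x12_sub_ne (n : ℕ) {a b : Fin n} (hab : a ≠ b) : x12 n a - x12 n b ≠ 0 := by
  intro hz
  have h0 : (X (some a) - X (some b) : R12 n) = 0 :=
    IsFractionRing.injective (R12 n) (F12 n) (by simpa [x12, map_sub] using hz)
  have := congrArg (eval (fun v => if v = some a then (1:ℚ) else 0)) h0
  simp [eval_X, Ne.symm hab] at this

lemma x12_sub_t_ne (n : ℕ) (a b : Fin n) : x12 n a - t12 n * x12 n b ≠ 0 := by
  intro hz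
  have h0 : (X (some a) - X none * X (some b) : R12 n) = 0 :=
    IsFractionRing.injective (R12 n) (F12 n) (by simpa [x12, t12, map_sub, map_mul] using hz)
  have := congrArg (eval (fun v => if v = some a then (1:ℚ) else 0)) h0
  simp [eval_X] at this

lemma core_identity12 {K : Type*} [Field K] (t xa xb m D : K)
    (h1 : xa - xb ≠ 0) (h2 : xb - xa ≠ 0) (h3 : xa - t * xb ≠ 0) (h5 : xa ≠ 0) :
    m * ((xb - t * xa) / (xb - xa) / ((xa - t * xb) / (xa - xb)) * D)
        - t * (m * xb / xa * ((xb - t * xa) / (xb - xa) / ((xa - t * xb) / (xa - xb)) * D))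
      = -(m * xb / xa * D - t * (m * D)) := by
  have h4 : xa - xb * t ≠ 0 := by rwa [mul_comm]
  field_simp
  ring

set_option maxHeartbeats 2000000 in
theorem hall_littlewood_shift_aux (n : ℕ) (lam : Fin n → ℕ) (a b : Fin n)
    (hab : (a : ℕ) + 1 = (b : ℕ)) (h : lam a = lam b + 1) :
    HL12 n (Function.update (Function.update lam a (lam a - 1)) b (lam b + 1)) =
      t12 n * HL12 n lam := by
  have hne : a ≠ b := by
    intro e; rw [e] at hab; omega
  set lam' := Function.update (Function.update lam a (lam a - 1)) b (lam b + 1) with hlam'def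
  have hl'a : lam' a = lam b := by
    rw [hlam'def, Function.update_of_ne hne, Function.update_self]; omega
  have hl'b : lam' b = lam a := by rw [hlam'def, Function.update_self]; omega
  have hl'o : ∀ j, j ≠ a → j ≠ b → lam' j = lam j := by
    intro j hja hjb
    rw [hlam'def, Function.update_of_ne hjb, Function.update_of_ne hja]
  set s : Equiv.Perm (Fin n) := Equiv.swap a b with hsdef
  have hsa : s a = b := Equiv.swap_apply_left a b
  have hsb : s b = a := Equiv.swap_apply_right a b
  have hso : ∀ j, j ≠ a → j ≠ b → s j = j := fun j hja hjb =>
    Equiv.swap_apply_of_ne_of_ne hja hjb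
  have hss : ∀ j, s (s j) = j := fun j => Equiv.swap_apply_self a b j
  have hsval : ∀ q : Fin n, ((s q : Fin n) : ℕ)
      = if (q : ℕ) = (a : ℕ) then (b : ℕ) else if (q : ℕ) = (b : ℕ) then (a : ℕ) else (q : ℕ) := by
    intro q
    rw [hsdef, Equiv.swap_apply_def]
    split_ifs <;> simp_all [Fin.ext_iff]
  -- the set of ordered pairs i < j
  set P : Finset (Fin n × Fin n) := Finset.univ.filter (fun p => p.1 < p.2) with hPdef
  have hPmem : ∀ p : Fin n × Fin n, p ∈ P ↔ p.1 < p.2 := by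
    intro p; simp [hPdef]
  set G : Fin n → Fin n → F12 n :=
    fun p q => (x12 n p - t12 n * x12 n q) / (x12 n p - x12 n q) with hGdef
  have hProd : ∀ q : Fin n → Fin n → F12 n,
      ∏ p ∈ P, q p.1 p.2 = ∏ i : Fin n, ∏ j ∈ Ioi i, q i j := by
    intro q
    refine Finset.prod_finset_product' P univ (fun i => Ioi i) ?_
    intro p; rw [hPmem]; simp [Finset.mem_Ioi]
  set D : F12 n := ∏ p ∈ P, G p.1 p.2 with hDdef
  have hGne : ∀ p q : Fin n, p ≠ q → G p q ≠ 0 := fun p q hpq =>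
    div_ne_zero (x12_sub_t_ne n p q) (x12_sub_ne n hpq)
  have hpactD : ∀ σ : Equiv.Perm (Fin n),
      pact12 n σ D = ∏ p ∈ P, G (σ p.1) (σ p.2) := by
    intro σ
    rw [hDdef, map_prod]
    refine Finset.prod_congr rfl fun p _ => ?_
    simp only [hGdef]
    simp only [map_div₀, map_sub, map_mul, pact12_x, pact12_t]
  -- the unique inverted pair is (a, b)
  have key : ∀ p : Fin n × Fin n, p.1 < p.2 → ¬ s p.1 < s p.2 → p = (a, b) := by
    rintro ⟨p1, p2⟩ h1 h2
    rw [Fin.lt_def] at h1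
    rw [Fin.lt_def, hsval p1, hsval p2] at h2
    rw [Prod.mk.injEq, Fin.ext_iff, Fin.ext_iff]
    simp only at h1 h2 ⊢
    split_ifs at h2 <;> omega
  -- the involution on pairs
  set e : Fin n × Fin n → Fin n × Fin n :=
    fun p => if s p.1 < s p.2 then (s p.1, s p.2) else (s p.2, s p.1) with hedef
  have hemem : ∀ p ∈ P, e p ∈ P := by
    intro p hp
    rw [hPmem] at hp ⊢
    simp only [hedef]
    split_ifs with hlt
    · exact hlt
    · exact lt_of_le_of_ne (not_lt.mp hlt)
        (fun eeq => (ne_of_lt hp) (s.injective eeq.symm))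
  have heinv : ∀ p ∈ P, e (e p) = p := by
    intro p hp
    rw [hPmem] at hp
    simp only [hedef]
    by_cases hlt : s p.1 < s p.2
    · simp only [if_pos hlt, hss, if_pos hp]
    · simp only [if_neg hlt, hss, if_neg (not_lt.mpr (le_of_lt hp))]
  have habP : (a, b) ∈ P := by
    rw [hPmem]
    show a < b
    rw [Fin.lt_def]; omega
  have hswapD : ∏ p ∈ P, G (s p.1) (s p.2) = G b a / G a b * D := by
    have step1 : ∏ p ∈ P, G (s p.1) (s p.2)
        = ∏ p ∈ P, (if p = (a, b) then G b a else G p.1 p.2) := by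
      refine Finset.prod_bij' (fun p _ => e p) (fun p _ => e p)
        hemem hemem heinv heinv ?_
      intro p hp
      by_cases hlt : s p.1 < s p.2
      · simp only [hedef, if_pos hlt]
        rw [if_neg]
        intro contra
        rw [Prod.mk.injEq] at contra
        have e1 : p.1 = b := s.injective (by rw [contra.1, hsb])
        have e2 : p.2 = a := s.injective (by rw [contra.2, hsa])
        have hlt' := (hPmem p).mp hp
        rw [e1, e2, Fin.lt_def] at hlt'
        omega
      · have hpab : p = (a, b) := key p ((hPmem p).mp hp) hlt
        subst hpab
        have heab : e (a, b) = (a, b) := by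
          simp only [hedef]
          rw [hsa, hsb, if_neg (show ¬ b < a by rw [Fin.lt_def]; omega)]
        dsimp only
        rw [heab, if_pos rfl, hsa, hsb]
    rw [step1, ← Finset.mul_prod_erase P _ habP, if_pos rfl]
    have e3 : ∏ p ∈ P.erase (a, b), (if p = (a, b) then G b a else G p.1 p.2)
        = ∏ p ∈ P.erase (a, b), G p.1 p.2 := by
      refine Finset.prod_congr rfl fun p hp => ?_
      rw [if_neg (Finset.ne_of_mem_erase hp)]
    have e2 : D = G a b * ∏ p ∈ P.erase (a, b), G p.1 p.2 :=
      (Finset.mul_prod_erase P _ habP).symm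
    rw [e3, e2, ← mul_assoc, div_mul_cancel₀ _ (hGne a b hne)]
  -- monomial facts
  set m : F12 n := ∏ j : Fin n, x12 n j ^ lam j with hmdef
  set m' : F12 n := ∏ j : Fin n, x12 n j ^ lam' j with hm'def
  have hpactm : ∀ (σ : Equiv.Perm (Fin n)) (μ : Fin n → ℕ),
      pact12 n σ (∏ j : Fin n, x12 n j ^ μ j) = ∏ j : Fin n, x12 n (σ j) ^ μ j := by
    intro σ μ
    rw [map_prod]
    refine Finset.prod_congr rfl fun j _ => ?_
    rw [map_pow, pact12_x]
  have hmu : ∀ j, lam' (s j) = lam j := by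
    intro j
    by_cases hja : j = a
    · rw [hja, hsa, hl'b]
    · by_cases hjb : j = b
      · rw [hjb, hsb, hl'a]
      · rw [hso j hja hjb, hl'o j hja hjb]
  have hmu' : ∀ j, lam (s j) = lam' j := by
    intro j
    by_cases hja : j = a
    · rw [hja, hsa, hl'a]
    · by_cases hjb : j = b
      · rw [hjb, hsb, hl'b]
      · rw [hso j hja hjb, hl'o j hja hjb]
  have hsm' : pact12 n s m' = m := by
    rw [hm'def, hpactm, hmdef]
    refine Fintype.prod_equiv s _ _ fun j => ?_
    congr 1
    exact (hmu' j).symm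
  have hsm : pact12 n s m = m' := by
    rw [hmdef, hpactm, hm'def]
    refine Fintype.prod_equiv s _ _ fun j => ?_
    congr 1
    exact (hmu j).symm
  have hmono : m' * x12 n a = m * x12 n b := by
    have ha' : x12 n a = ∏ j : Fin n, (if j = a then x12 n j else 1) := by
      rw [Finset.prod_ite_eq' univ a (fun j => x12 n j)]; simp
    have hb' : x12 n b = ∏ j : Fin n, (if j = b then x12 n j else 1) := by
      rw [Finset.prod_ite_eq' univ b (fun j => x12 n j)]; simp
    rw [hmdef, hm'def, ha', hb', ← Finset.prod_mul_distrib, ← Finset.prod_mul_distrib]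
    refine Finset.prod_congr rfl fun j _ => ?_
    by_cases hja : j = a
    · rw [hja, if_pos rfl, if_neg hne, mul_one, hl'a, ← pow_succ, h]
    · by_cases hjb : j = b
      · rw [hjb, if_neg (Ne.symm hne), if_pos rfl, mul_one, hl'b, h, pow_succ]
      · rw [if_neg hja, if_neg hjb, hl'o j hja hjb]
  have hmono' : m' = m * x12 n b / x12 n a := by
    rw [eq_div_iff (x12_ne_zero n a)]; exact hmono
  -- the core cancellation identity
  have hcore : pact12 n s (m' * D - t12 n * (m * D)) = -(m' * D - t12 n * (m * D)) := by
    rw [map_sub, map_mul, map_mul, map_mul, pact12_t, hsm', hsm, hpactD s, hswapD, hmono']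
    simp only [hGdef]
    clear_value D m
    exact core_identity12 (t12 n) (x12 n a) (x12 n b) m D
      (x12_sub_ne n hne) (x12_sub_ne n (Ne.symm hne)) (x12_sub_t_ne n a b) (x12_ne_zero n a)
  -- summing up
  rw [← sub_eq_zero]
  have hHL' : HL12 n lam' = ∑ σ : Equiv.Perm (Fin n), pact12 n σ (m' * D) := by
    rw [HL12]
    refine Finset.sum_congr rfl fun σ _ => ?_
    congr 1
    rw [hm'def, hDdef, hProd G]
  have hHL : t12 n * HL12 n lam = ∑ σ : Equiv.Perm (Fin n), pact12 n σ (t12 n * (m * D)) := by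
    rw [HL12, Finset.mul_sum]
    refine Finset.sum_congr rfl fun σ _ => ?_
    conv_rhs => rw [map_mul, pact12_t]
    congr 1
    congr 1
    rw [hmdef, hDdef, hProd G]
  rw [hHL', hHL, ← Finset.sum_sub_distrib]
  have hterm : ∀ σ : Equiv.Perm (Fin n),
      pact12 n σ (m' * D) - pact12 n σ (t12 n * (m * D))
        = pact12 n σ (m' * D - t12 n * (m * D)) := fun σ => (map_sub _ _ _).symm
  rw [Finset.sum_congr rfl fun σ _ => hterm σ]
  set f : F12 n := m' * D - t12 n * (m * D) with hfdef
  set S : F12 n := ∑ σ : Equiv.Perm (Fin n), pact12 n σ f with hSdef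
  have hneg : S = -S := by
    calc S = ∑ σ : Equiv.Perm (Fin n), pact12 n σ f := hSdef
    _ = ∑ σ : Equiv.Perm (Fin n), pact12 n (σ * s) f :=
        (Equiv.sum_comp (Equiv.mulRight s) (fun τ => pact12 n τ f)).symm
    _ = ∑ σ : Equiv.Perm (Fin n), pact12 n σ (pact12 n s f) := by
        refine Finset.sum_congr rfl fun σ _ => ?_
        rw [pact12_pact12]
    _ = ∑ σ : Equiv.Perm (Fin n), -(pact12 n σ f) := by
        refine Finset.sum_congr rfl fun σ _ => ?_
        rw [hfdef, hcore, map_neg]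
    _ = -S := by rw [Finset.sum_neg_distrib, hSdef]
  haveI : CharZero (F12 n) :=
    charZero_of_injective_algebraMap (IsFractionRing.injective (R12 n) (F12 n))
  have hzero : S + S = 0 := by nth_rewrite 2 [hneg]; exact add_neg_cancel S
  exact add_self_eq_zero.mp hzero

/-- **Shift identity.** If `λ` is a tuple of nonnegative integers with
`λ_i = λ_{i+1} + 1`, and `λ*` is obtained from `λ` by replacing
`(λ_i, λ_{i+1})` with `(λ_i - 1, λ_{i+1} + 1)`, then `P_{λ*}(x;t) = t ⬝ P_λ(x;t)`. -/
theorem hall_littlewood_shift (n : ℕ) (lam : Fin n → ℕ) (i : ℕ) (hi : i + 1 < n)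
    (h : lam ⟨i, by omega⟩ = lam ⟨i + 1, hi⟩ + 1) :
    HL12 n (Function.update (Function.update lam ⟨i, by omega⟩ (lam ⟨i, by omega⟩ - 1))
        ⟨i + 1, hi⟩ (lam ⟨i + 1, hi⟩ + 1)) =
      t12 n * HL12 n lam := by
  exact hall_littlewood_shift_aux n lam ⟨i, by omega⟩ ⟨i + 1, hi⟩ rfl h

end
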